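/- Let F_2 be the 3×4 matrix with rows (1,1,0,0),(1,0,1,0),(0,1,0,1). If A is a simple m-rowed matrix avoiding F_2 with at least ⌊m²/4⌋ + m + 1 − m/6 + 1 columns, then A is a configuration in [0_k T_k] × [0_{m−k} T_{m−k}] for some k with both k and m−k at least m/2 − √(m/6). -/

import Mathlib

/-- A (0,1)-matrix (entries as `Bool`) is simple if it has no repeated columns. -/
def Simple {α β : Type*} (A : α → β → Bool) : Prop :=
  Function.Injective fun j i => A i j

/-- `F` is a configuration in `A`: some submatrix of `A` is a row and column
permutation of `F`. -/
def IsConfig {α β γ δ : Type*} (F : α → β → Bool) (A : γ → δ → Bool) : Prop :=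
  ∃ (r : α ↪ γ) (c : β ↪ δ), ∀ i j, F i j = A (r i) (c j)

/-- `F₂`, the 3×4 matrix with rows (1,1,0,0), (1,0,1,0), (0,1,0,1). -/
def F2 : Fin 3 → Fin 4 → Bool :=
  ![![true, true, false, false], ![true, false, true, false], ![false, true, false, true]]

/-- The product `[0_k T_k] × [0_l T_l]`. -/
def triProd (k l : ℕ) : (Fin k ⊕ Fin l) → (Fin (k + 1) × Fin (l + 1)) → Bool
  | Sum.inl i, (c, _) => decide ((i : ℕ) < (c : ℕ))
  | Sum.inr i, (_, d) => decide ((i : ℕ) < (d : ℕ))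

namespace Stmt7

variable {m : ℕ}

abbrev Fam (m : ℕ) := Finset (Finset (Fin m))

/-- x ⊑ y : every column (member of the family) containing x contains y. -/
def fsub (F : Fam m) (x y : Fin m) : Prop := ∀ S ∈ F, x ∈ S → y ∈ S

def fcomp (F : Fam m) (x y : Fin m) : Prop := fsub F x y ∨ fsub F y x

instance (F : Fam m) (x y : Fin m) : Decidable (fsub F x y) := by
  unfold fsub; infer_instance

instance (F : Fam m) (x y : Fin m) : Decidable (fcomp F x y) := by
  unfold fcomp; infer_instance

lemma fsub_refl (F : Fam m) (x : Fin m) : fsub F x x := fun _ _ h => h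

lemma fsub_trans {F : Fam m} {x y z : Fin m} (h1 : fsub F x y) (h2 : fsub F y z) :
    fsub F x z := fun S hS hx => h2 S hS (h1 S hS hx)

/-- The family contains a configuration F₂ (with special row a and other rows u,v). -/
def HasF2 (F : Fam m) : Prop :=
  ∃ a u v : Fin m, a ≠ u ∧ a ≠ v ∧ u ≠ v ∧
   ∃ S1 ∈ F, ∃ S2 ∈ F, ∃ S3 ∈ F, ∃ S4 ∈ F,
    (a ∈ S1 ∧ u ∈ S1 ∧ v ∉ S1) ∧ (a ∈ S2 ∧ u ∉ S2 ∧ v ∈ S2) ∧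
    (a ∉ S3 ∧ u ∈ S3 ∧ v ∉ S3) ∧ (a ∉ S4 ∧ u ∉ S4 ∧ v ∈ S4)

/-- Twin columns at row a : sets S with a ∉ S such that both S and insert a S are columns. -/
def Twins (F : Fam m) (a : Fin m) : Fam m := F.filter (fun S => a ∉ S ∧ insert a S ∈ F)

lemma twins_mem_F {F : Fam m} {a : Fin m} {S} (h : S ∈ Twins F a) : S ∈ F :=
  (Finset.mem_filter.1 h).1
lemma twins_not_mem {F : Fam m} {a : Fin m} {S} (h : S ∈ Twins F a) : a ∉ S :=
  (Finset.mem_filter.1 h).2.1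
lemma twins_insert_mem {F : Fam m} {a : Fin m} {S} (h : S ∈ Twins F a) : insert a S ∈ F :=
  (Finset.mem_filter.1 h).2.2

lemma mem_ne_of_twins {F : Fam m} {a u : Fin m} {S} (h : S ∈ Twins F a) (hu : u ∈ S) : u ≠ a :=
  fun e => twins_not_mem h (e ▸ hu)

lemma not_mem_insert_of {a u : Fin m} {S : Finset (Fin m)} (h1 : u ≠ a) (h2 : u ∉ S) :
    u ∉ insert a S := by simp [Finset.mem_insert, h1, h2]

/-- T1: the twin sets at a row form a chain. -/
lemma twins_chain {F : Fam m} (hF2 : ¬ HasF2 F) {a : Fin m} {S T}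
    (hS : S ∈ Twins F a) (hT : T ∈ Twins F a) : S ⊆ T ∨ T ⊆ S := by
  by_contra h
  push_neg at h
  obtain ⟨u, huS, huT⟩ := Finset.not_subset.1 h.1
  obtain ⟨v, hvT, hvS⟩ := Finset.not_subset.1 h.2
  have hua : u ≠ a := mem_ne_of_twins hS huS
  have hva : v ≠ a := mem_ne_of_twins hT hvT
  have huv : u ≠ v := fun e => hvS (e ▸ huS)
  exact hF2 ⟨a, u, v, hua.symm, hva.symm, huv,
    insert a S, twins_insert_mem hS, insert a T, twins_insert_mem hT,
    S, twins_mem_F hS, T, twins_mem_F hT,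
    ⟨Finset.mem_insert_self _ _, Finset.mem_insert_of_mem huS, not_mem_insert_of hva hvS⟩,
    ⟨Finset.mem_insert_self _ _, not_mem_insert_of hua huT, Finset.mem_insert_of_mem hvT⟩,
    ⟨twins_not_mem hS, huS, hvS⟩,
    ⟨twins_not_mem hT, huT, hvT⟩⟩

/-- u is separated before v in the twin chain of a. -/
def Sep (F : Fam m) (a u v : Fin m) : Prop :=
  ∃ P ∈ Twins F a, ∃ Q ∈ Twins F a, ∃ R ∈ Twins F a,
    (u ∉ P ∧ v ∉ P) ∧ (u ∈ Q ∧ v ∉ Q) ∧ (u ∈ R ∧ v ∈ R)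

/-- Key lemma W: if u appears strictly before v in the twin chain of a,
then every column containing v contains u. -/
lemma lemW {F : Fam m} (hF2 : ¬ HasF2 F) {a u v : Fin m} (huv : u ≠ v)
    (h : Sep F a u v) : fsub F v u := by
  obtain ⟨P, hP, Q, hQ, R, hR, ⟨huP, hvP⟩, ⟨huQ, hvQ⟩, ⟨huR, hvR⟩⟩ := h
  intro Z hZ hvZ
  by_contra huZ
  have hua : u ≠ a := mem_ne_of_twins hQ huQ
  have hva : v ≠ a := mem_ne_of_twins hR hvR
  by_cases haZ : a ∈ Z
  · -- F2 with rows (v ; a, u): columns Z, R, insert a P, Q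
    exact hF2 ⟨v, a, u, hva, huv.symm, hua.symm,
      Z, hZ, R, twins_mem_F hR, insert a P, twins_insert_mem hP, Q, twins_mem_F hQ,
      ⟨hvZ, haZ, huZ⟩,
      ⟨hvR, twins_not_mem hR, huR⟩,
      ⟨not_mem_insert_of hva hvP, Finset.mem_insert_self _ _, not_mem_insert_of hua huP⟩,
      ⟨hvQ, twins_not_mem hQ, huQ⟩⟩
  · -- F2 with rows (u ; a, v): columns insert a Q, R, insert a P, Z
    exact hF2 ⟨u, a, v, hua, huv, hva.symm,
      insert a Q, twins_insert_mem hQ, R, twins_mem_F hR,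
      insert a P, twins_insert_mem hP, Z, hZ,
      ⟨Finset.mem_insert_of_mem huQ, Finset.mem_insert_self _ _, not_mem_insert_of hva hvQ⟩,
      ⟨huR, twins_not_mem hR, hvR⟩,
      ⟨not_mem_insert_of hua huP, Finset.mem_insert_self _ _, not_mem_insert_of hva hvP⟩,
      ⟨huZ, haZ, hvZ⟩⟩

/-- Two separated jumps are comparable. -/
lemma fcomp_of_sep {F : Fam m} (hF2 : ¬ HasF2 F) {a u v : Fin m} (huv : u ≠ v)
    (h : Sep F a u v ∨ Sep F a v u) : fcomp F u v := by
  rcases h with h | h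
  · exact Or.inr (lemW hF2 huv h)
  · exact Or.inl (lemW hF2 huv.symm h)

/-- u is a jump of the twin chain of row r. -/
def IsJump (F : Fam m) (r u : Fin m) : Prop :=
  (∃ S ∈ Twins F r, u ∉ S) ∧ (∃ T ∈ Twins F r, u ∈ T)

instance (F : Fam m) (r u : Fin m) : Decidable (IsJump F r u) := by
  unfold IsJump; infer_instance

lemma jump_ne {F : Fam m} {r u : Fin m} (h : IsJump F r u) : u ≠ r := by
  obtain ⟨_, T, hT, huT⟩ := h
  exact mem_ne_of_twins hT huT

/-- Q-lemma: if u,b are separated jumps of a (in either order), then u is not a jump of b. -/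
lemma not_jump_of_sep {F : Fam m} (hF2 : ¬ HasF2 F) {a b u : Fin m} (hbu : b ≠ u)
    (h : Sep F a b u ∨ Sep F a u b) : ¬ IsJump F b u := by
  intro hj
  rcases h with h | h
  · -- b before u: W gives fsub F u b; but u lies in some twin set of b which omits b
    have hsub : fsub F u b := lemW hF2 hbu h
    obtain ⟨_, T, hT, huT⟩ := hj
    exact twins_not_mem hT (hsub T (twins_mem_F hT) huT)
  · -- u before b: W gives fsub F b u; consider insert b S for twin S of b omitting u
    have hsub : fsub F b u := lemW hF2 hbu.symm h
    obtain ⟨⟨S, hS, huS⟩, _⟩ := hj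
    have : u ∈ insert b S := hsub (insert b S) (twins_insert_mem hS) (Finset.mem_insert_self _ _)
    rcases Finset.mem_insert.1 this with e | e
    · exact hbu e.symm
    · exact huS e


/-- A chain of finsets can be enumerated as a sorted list. -/
lemma exists_sorted_chain {α : Type*} [DecidableEq α] (C : Finset (Finset α))
    (hc : ∀ S ∈ C, ∀ T ∈ C, S ⊆ T ∨ T ⊆ S) :
    ∃ L : List (Finset α), L.Nodup ∧ L.toFinset = C ∧ L.Pairwise (· ⊆ ·) := by
  induction C using Finset.strongInduction with
  | _ C ih =>
    rcases C.eq_empty_or_nonempty with rfl | hne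
    · exact ⟨[], by simp, by simp, by simp⟩
    · obtain ⟨S0, hS0, hmin⟩ := Finset.exists_min_image C Finset.card hne
      have hS0min : ∀ T ∈ C, S0 ⊆ T := by
        intro T hT
        rcases hc S0 hS0 T hT with h | h
        · exact h
        · exact le_of_eq (Finset.eq_of_subset_of_card_le h (hmin T hT)).symm
      have hsub : C.erase S0 ⊂ C := Finset.erase_ssubset hS0
      obtain ⟨L', hnd, htf, hpw⟩ := ih (C.erase S0) hsub
        (fun S hS T hT => hc S (Finset.mem_of_mem_erase hS) T (Finset.mem_of_mem_erase hT))
      refine ⟨S0 :: L', ?_, ?_, ?_⟩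
      · refine List.nodup_cons.2 ⟨?_, hnd⟩
        intro hmem
        have : S0 ∈ C.erase S0 := htf ▸ List.mem_toFinset.2 hmem
        exact (Finset.notMem_erase _ _) this
      · simp only [List.toFinset_cons, htf]
        exact Finset.insert_erase hS0
      · refine List.pairwise_cons.2 ⟨?_, hpw⟩
        intro T hT
        exact hS0min T (Finset.mem_of_mem_erase (htf ▸ List.mem_toFinset.2 hT))

/-- Representative set of the jumps of the twin chain of row r:
one representative per consecutive gap. -/
lemma repset {F : Fam m} (hF2 : ¬ HasF2 F) (r : Fin m) :
    ∃ J : Finset (Fin m), J.card = (Twins F r).card - 1 ∧ r ∉ J ∧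
      (∀ u ∈ J, IsJump F r u) ∧
      (∀ u ∈ J, ∀ v ∈ J, u ≠ v → Sep F r u v ∨ Sep F r v u) := by
  classical
  obtain ⟨L, hnd, htf, hpw⟩ := exists_sorted_chain (Twins F r) (fun S hS T hT => twins_chain hF2 hS hT)
  have hlen : L.length = (Twins F r).card := by
    rw [← htf]; exact (List.toFinset_card_of_nodup hnd).symm
  set t := L.length with hts
  have hget : ∀ i : Fin L.length, L.get i ∈ Twins F r := by
    intro i; rw [← htf]; exact List.mem_toFinset.2 (by simpa using L.get_mem ↑i i.2)
  have hmono : ∀ (i j : ℕ) (hi : i < t) (hj : j < t), i ≤ j → L.get ⟨i, hi⟩ ⊆ L.get ⟨j, hj⟩ := by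
    intro i j hi hj hij
    rcases Nat.lt_or_ge i j with h | h
    · exact List.pairwise_iff_get.1 hpw ⟨i, hi⟩ ⟨j, hj⟩ h
    · have : i = j := le_antisymm hij h
      subst this; rfl
  have hnodupget : ∀ (i j : ℕ) (hi : i < t) (hj : j < t), i < j →
      L.get ⟨i, hi⟩ ≠ L.get ⟨j, hj⟩ := by
    intro i j hi hj hij e
    have := (List.nodup_iff_injective_get.1 hnd) e
    simp only [Fin.mk.injEq] at this
    omega
  -- gap sets
  have hDne : ∀ (i : ℕ) (h : i + 1 < t), (L.get ⟨i+1, h⟩ \ L.get ⟨i, by omega⟩).Nonempty := by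
    intro i h
    rw [Finset.sdiff_nonempty]
    intro hsub
    exact hnodupget i (i+1) (by omega) h (by omega)
      (Finset.Subset.antisymm (hmono i (i+1) (by omega) h (by omega)) hsub)
  set rep : ℕ → Fin m := fun i =>
    if h : i + 1 < t then (hDne i h).choose else r with hrep
  have hrep_spec : ∀ (i : ℕ) (h : i + 1 < t),
      rep i ∈ L.get ⟨i+1, h⟩ ∧ rep i ∉ L.get ⟨i, by omega⟩ := by
    intro i h
    have := (hDne i h).choose_spec
    rw [Finset.mem_sdiff] at this
    simpa [hrep, dif_pos h] using this
  -- rep i ∉ L.get j for j ≤ i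
  have hrep_not : ∀ (i j : ℕ) (h : i + 1 < t) (hj : j < t), j ≤ i → rep i ∉ L.get ⟨j, hj⟩ := by
    intro i j h hj hji hmem
    exact (hrep_spec i h).2 (hmono j i hj (by omega) hji hmem)
  -- rep i ∈ L.get j for j ≥ i+1
  have hrep_in : ∀ (i j : ℕ) (h : i + 1 < t) (hj : j < t), i + 1 ≤ j → rep i ∈ L.get ⟨j, hj⟩ :=
    fun i j h hj hij => hmono (i+1) j h hj hij ((hrep_spec i h).1)
  refine ⟨(Finset.range (t-1)).image rep, ?_, ?_, ?_, ?_⟩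
  · rw [Finset.card_image_of_injOn, Finset.card_range, hlen]
    intro i hi j hj hij
    simp only [Finset.coe_range, Set.mem_Iio] at hi hj
    by_contra hne
    rcases Nat.lt_or_ge i j with h | h
    · exact hrep_not j (i+1) (by omega) (by omega) (by omega)
        (hij ▸ hrep_in i (i+1) (by omega) (by omega) le_rfl)
    · have h' : j < i := by omega
      exact hrep_not i (j+1) (by omega) (by omega) (by omega)
        (hij.symm ▸ hrep_in j (j+1) (by omega) (by omega) le_rfl)
  · intro hmem
    obtain ⟨i, hi, he⟩ := Finset.mem_image.1 hmem
    rw [Finset.mem_range] at hi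
    have h1 : i + 1 < t := by omega
    have := (hrep_spec i h1).1
    rw [he] at this
    exact twins_not_mem (hget ⟨i+1, h1⟩) this
  · intro u hu
    obtain ⟨i, hi, he⟩ := Finset.mem_image.1 hu
    rw [Finset.mem_range] at hi
    have h1 : i + 1 < t := by omega
    subst he
    exact ⟨⟨L.get ⟨i, by omega⟩, hget _, (hrep_spec i h1).2⟩,
           ⟨L.get ⟨i+1, h1⟩, hget _, (hrep_spec i h1).1⟩⟩
  · -- pairwise separation
    have main : ∀ (i j : ℕ), i + 1 < t → j + 1 < t → i < j → Sep F r (rep i) (rep j) := by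
      intro i j hi hj hij
      refine ⟨L.get ⟨0, by omega⟩, hget _, L.get ⟨i+1, hi⟩, hget _, L.get ⟨j+1, hj⟩, hget _,
        ⟨hrep_not i 0 hi (by omega) (by omega), hrep_not j 0 hj (by omega) (by omega)⟩,
        ⟨(hrep_spec i hi).1, hrep_not j (i+1) hj (by omega) (by omega)⟩,
        ⟨hrep_in i (j+1) hi hj (by omega), (hrep_spec j hj).1⟩⟩
    intro u hu v hv huv
    obtain ⟨i, hi, hei⟩ := Finset.mem_image.1 hu
    obtain ⟨j, hj, hej⟩ := Finset.mem_image.1 hv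
    rw [Finset.mem_range] at hi hj
    subst hei; subst hej
    rcases Nat.lt_or_ge i j with h | h
    · exact Or.inl (main i j (by omega) (by omega) h)
    · have hne : i ≠ j := fun e => huv (by rw [e])
      exact Or.inr (main j i (by omega) (by omega) (by omega))

lemma not_fcomp_witness {F : Fam m} {x y : Fin m} (h : ¬ fcomp F x y) :
    (∃ S ∈ F, x ∈ S ∧ y ∉ S) ∧ (∃ S ∈ F, y ∈ S ∧ x ∉ S) := by
  rw [fcomp, not_or] at h
  obtain ⟨h1, h2⟩ := h
  constructor
  · by_contra hc; push_neg at hc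
    exact h1 hc
  · by_contra hc; push_neg at hc
    exact h2 hc

lemma ne_of_not_fcomp {F : Fam m} {x y : Fin m} (h : ¬ fcomp F x y) : x ≠ y := by
  rintro rfl
  exact h (Or.inl (fsub_refl F x))

lemma not_fcomp_symm {F : Fam m} {x y : Fin m} (h : ¬ fcomp F x y) : ¬ fcomp F y x := by
  rw [fcomp, not_or] at h ⊢
  exact ⟨h.2, h.1⟩

lemma jump_mem_V {F : Fam m} {V : Finset (Fin m)} (hFV : ∀ S ∈ F, S ⊆ V) {r u : Fin m}
    (h : IsJump F r u) : u ∈ V := by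
  obtain ⟨_, T, hT, huT⟩ := h
  exact hFV T (twins_mem_F hT) huT

/-- Lemma S : in presence of a 3-antichain x,y,z, some row outside {x,y,z} has
few twins. -/
lemma lemS {F : Fam m} {V : Finset (Fin m)} (hFV : ∀ S ∈ F, S ⊆ V) (hF2 : ¬ HasF2 F)
    {x y z : Fin m} (hx : x ∈ V) (hy : y ∈ V) (hz : z ∈ V)
    (hxy : ¬ fcomp F x y) (hxz : ¬ fcomp F x z) (hyz : ¬ fcomp F y z)
    (h4 : 4 ≤ V.card) :
    ∃ a ∈ V, a ≠ x ∧ a ≠ y ∧ a ≠ z ∧ (Twins F a).card ≤ (V.card + 1) / 2 := by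
  classical
  by_contra hall
  push_neg at hall
  -- any two distinct elements of {x,y,z} are incomparable
  have anti : ∀ u ∈ ({x, y, z} : Finset (Fin m)), ∀ v ∈ ({x, y, z} : Finset (Fin m)),
      u ≠ v → ¬ fcomp F u v := by
    intro u hu v hv huv
    simp only [Finset.mem_insert, Finset.mem_singleton] at hu hv
    rcases hu with rfl | rfl | rfl <;> rcases hv with rfl | rfl | rfl <;>
      first
        | exact absurd rfl huv
        | exact hxy | exact hxz | exact hyz
        | exact not_fcomp_symm hxy | exact not_fcomp_symm hxz | exact not_fcomp_symm hyz
  set s : ℕ := (V.card + 1) / 2 with hs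
  have hrich : ∀ a ∈ V, a ∉ ({x, y, z} : Finset (Fin m)) → s + 1 ≤ (Twins F a).card := by
    intro a ha hmem
    simp only [Finset.mem_insert, Finset.mem_singleton, not_or] at hmem
    exact hall a ha hmem.1 hmem.2.1 hmem.2.2
  -- pick a ∈ V outside {x,y,z}
  have hxyzcard : ({x, y, z} : Finset (Fin m)).card ≤ 3 := by
    apply le_trans (Finset.card_insert_le _ _)
    apply Nat.succ_le_succ
    apply le_trans (Finset.card_insert_le _ _)
    simp
  have hVsd : (V \ ({x, y, z} : Finset (Fin m))).Nonempty := by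
    rw [← Finset.card_pos]
    have := Finset.le_card_sdiff ({x, y, z} : Finset (Fin m)) V
    omega
  obtain ⟨a, ha⟩ := hVsd
  rw [Finset.mem_sdiff] at ha
  have hta : s + 1 ≤ (Twins F a).card := hrich a ha.1 ha.2
  have hs2 : 2 ≤ s := by
    rw [hs]; omega
  -- representative set for a
  obtain ⟨Ja, hJacard, hraJ, hJajump, hJasep⟩ := repset hF2 a
  have hJaV : Ja ⊆ V := fun u hu => jump_mem_V hFV (hJajump u hu)
  have hJacard' : s ≤ Ja.card := by omega
  -- at most one element of {x,y,z} in Ja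
  have honein : ∀ u ∈ Ja, ∀ v ∈ Ja, u ≠ v → u ∈ ({x, y, z} : Finset (Fin m)) →
      v ∉ ({x, y, z} : Finset (Fin m)) := by
    intro u hu v hv huv humem hvmem
    exact anti u humem v hvmem huv (fcomp_of_sep hF2 huv (hJasep u hu v hv huv))
  -- there is b ∈ Ja outside {x,y,z}
  obtain ⟨u0, hu0, v0, hv0, huv0⟩ := Finset.one_lt_card.1 (by omega : 1 < Ja.card)
  have hbex : ∃ b ∈ Ja, b ∉ ({x, y, z} : Finset (Fin m)) := by
    by_cases hc : u0 ∈ ({x, y, z} : Finset (Fin m))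
    · exact ⟨v0, hv0, honein u0 hu0 v0 hv0 huv0 hc⟩
    · exact ⟨u0, hu0, hc⟩
  obtain ⟨b, hbJ, hbxyz⟩ := hbex
  have hbV : b ∈ V := hJaV hbJ
  have htb : s + 1 ≤ (Twins F b).card := hrich b hbV hbxyz
  -- no jump of b lies in Ja
  have hjumpb : ∀ w, IsJump F b w → w ∉ Ja := by
    intro w hw hwJ
    by_cases hwb : w = b
    · exact (jump_ne hw) (hwb)
    · exact not_jump_of_sep hF2 (Ne.symm hwb) (hJasep b hbJ w hwJ (Ne.symm hwb)) hw
  -- jump set of b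
  set JSb : Finset (Fin m) := V.filter (fun w => IsJump F b w) with hJSb
  obtain ⟨Jb, hJbcard, hrbJ, hJbjump, hJbsep⟩ := repset hF2 b
  have hJbsub : Jb ⊆ JSb := by
    intro w hw
    rw [hJSb, Finset.mem_filter]
    exact ⟨jump_mem_V hFV (hJbjump w hw), hJbjump w hw⟩
  have hJSbsub : JSb ⊆ V \ Ja := by
    intro w hw
    rw [hJSb, Finset.mem_filter] at hw
    rw [Finset.mem_sdiff]
    exact ⟨hw.1, hjumpb w hw.2⟩
  have hcards : (Twins F b).card - 1 ≤ V.card - Ja.card := by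
    have h1 : Jb.card ≤ JSb.card := Finset.card_le_card hJbsub
    have h2 : JSb.card ≤ (V \ Ja).card := Finset.card_le_card hJSbsub
    have h3 : (V \ Ja).card = V.card - Ja.card := Finset.card_sdiff_of_subset hJaV
    omega
  -- counting: 2s ≤ V.card
  have hM : 2 * s ≤ V.card := by omega
  have hMeven : V.card = 2 * s := by
    rw [hs] at hM ⊢; omega
  -- equality case: Jb = JSb = V \ Ja
  have h5 : Jb.card = s := by omega
  have h6 : (V \ Ja).card = s := by
    rw [Finset.card_sdiff_of_subset hJaV]; omega
  have hJbeq : Jb = V \ Ja := by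
    apply Finset.eq_of_subset_of_card_le (hJbsub.trans hJSbsub)
    omega
  -- two of x,y,z are outside Ja, hence in Jb; they are comparable by repset: contradiction
  have hpair : ∃ u' v', u' ≠ v' ∧ u' ∈ ({x, y, z} : Finset (Fin m)) ∧
      v' ∈ ({x, y, z} : Finset (Fin m)) ∧ u' ∉ Ja ∧ v' ∉ Ja := by
    have hxyne : x ≠ y := ne_of_not_fcomp hxy
    have hxzne : x ≠ z := ne_of_not_fcomp hxz
    have hyzne : y ≠ z := ne_of_not_fcomp hyz
    by_cases hxin : x ∈ Ja
    · refine ⟨y, z, hyzne, by simp, by simp, ?_, ?_⟩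
      · intro hyin
        exact honein x hxin y hyin hxyne (by simp) (by simp)
      · intro hzin
        exact honein x hxin z hzin hxzne (by simp) (by simp)
    · by_cases hyin : y ∈ Ja
      · refine ⟨x, z, hxzne, by simp, by simp, hxin, ?_⟩
        intro hzin
        exact honein y hyin z hzin hyzne (by simp) (by simp)
      · exact ⟨x, y, hxyne, by simp, by simp, hxin, hyin⟩
  obtain ⟨u', v', hne', hum, hvm, huJa, hvJa⟩ := hpair
  have huV : u' ∈ V := by
    simp only [Finset.mem_insert, Finset.mem_singleton] at hum
    rcases hum with rfl | rfl | rfl <;> assumption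
  have hvV : v' ∈ V := by
    simp only [Finset.mem_insert, Finset.mem_singleton] at hvm
    rcases hvm with rfl | rfl | rfl <;> assumption
  have huJb : u' ∈ Jb := by rw [hJbeq, Finset.mem_sdiff]; exact ⟨huV, huJa⟩
  have hvJb : v' ∈ Jb := by rw [hJbeq, Finset.mem_sdiff]; exact ⟨hvV, hvJa⟩
  exact anti u' hum v' hvm hne' (fcomp_of_sep hF2 hne' (hJbsep u' huJb v' hvJb hne'))

/-- Deleting one row loses at most (Twins F a).card columns. -/
lemma card_le_image_erase {F : Fam m} (a : Fin m) :
    F.card ≤ (F.image (fun S => S.erase a)).card + (Twins F a).card := by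
  classical
  set F' := F.image (fun S => S.erase a) with hF'
  set F0 := F.filter (fun S => a ∉ S) with hF0
  set F1t := F.filter (fun S => a ∈ S ∧ S.erase a ∈ F) with hF1t
  set F1n := F.filter (fun S => a ∈ S ∧ S.erase a ∉ F) with hF1n
  have hsplit : F.card = F0.card + F1t.card + F1n.card := by
    have e1 := Finset.card_filter_add_card_filter_not (s := F) (p := fun S => a ∈ S)
    have e2 := Finset.card_filter_add_card_filter_not
      (s := F.filter (fun S => a ∈ S)) (p := fun S => S.erase a ∈ F)
    rw [Finset.filter_filter, Finset.filter_filter] at e2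
    have hf0 : F.filter (fun S => ¬ a ∈ S) = F0 := by rw [hF0]
    have hf1 : F.filter (fun S => a ∈ S ∧ S.erase a ∈ F) = F1t := by rw [hF1t]
    have hf2 : F.filter (fun S => a ∈ S ∧ ¬ S.erase a ∈ F) = F1n := by rw [hF1n]
    rw [hf0] at e1
    rw [hf1, hf2] at e2
    omega
  have h1 : F1t.card ≤ (Twins F a).card := by
    apply Finset.card_le_card_of_injOn (fun S => S.erase a)
    · intro S hS
      simp only [hF1t, Finset.mem_coe, Finset.mem_filter] at hS
      rw [Twins, Finset.mem_coe, Finset.mem_filter]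
      refine ⟨hS.2.2, Finset.notMem_erase _ _, ?_⟩
      rw [Finset.insert_erase hS.2.1]
      exact hS.1
    · intro S hS T hT he
      simp only [hF1t, Finset.mem_coe, Finset.mem_filter] at hS hT
      dsimp only at he
      rw [← Finset.insert_erase hS.2.1, ← Finset.insert_erase hT.2.1, he]
  have h0sub : F0 ⊆ F' := by
    intro S hS
    rw [hF0, Finset.mem_filter] at hS
    rw [hF']
    exact Finset.mem_image.2 ⟨S, hS.1, Finset.erase_eq_of_notMem hS.2⟩
  have h2 : F0.card + F1n.card ≤ F'.card := by
    have himg : F1n.image (fun S => S.erase a) ⊆ F' \ F0 := by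
      intro T hT
      obtain ⟨S, hS, rfl⟩ := Finset.mem_image.1 hT
      rw [hF1n, Finset.mem_filter] at hS
      rw [Finset.mem_sdiff]
      constructor
      · exact Finset.mem_image.2 ⟨S, hS.1, rfl⟩
      · intro hmem
        rw [hF0, Finset.mem_filter] at hmem
        exact hS.2.2 hmem.1
    have hinj : (F1n.image (fun S => S.erase a)).card = F1n.card := by
      apply Finset.card_image_of_injOn
      intro S hS T hT he
      simp only [hF1n, Finset.mem_coe, Finset.mem_filter] at hS hT
      dsimp only at he
      rw [← Finset.insert_erase hS.2.1, ← Finset.insert_erase hT.2.1, he]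
    have := Finset.card_le_card himg
    rw [hinj, Finset.card_sdiff_of_subset h0sub] at this
    have := Finset.card_le_card h0sub
    omega
  omega

lemma hasF2_of_image_erase {F : Fam m} {a : Fin m}
    (h : HasF2 (F.image (fun S => S.erase a))) : HasF2 F := by
  classical
  obtain ⟨b, u, v, hbu, hbv, huv, S1', hS1, S2', hS2, S3', hS3, S4', hS4, p1, p2, p3, p4⟩ := h
  obtain ⟨T1, hT1, rfl⟩ := Finset.mem_image.1 hS1
  obtain ⟨T2, hT2, rfl⟩ := Finset.mem_image.1 hS2
  obtain ⟨T3, hT3, rfl⟩ := Finset.mem_image.1 hS3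
  obtain ⟨T4, hT4, rfl⟩ := Finset.mem_image.1 hS4
  have hba : b ≠ a := (Finset.mem_erase.1 p1.1).1
  have hua : u ≠ a := (Finset.mem_erase.1 p1.2.1).1
  have hva : v ≠ a := (Finset.mem_erase.1 p2.2.2).1
  have lift : ∀ (w : Fin m) (T : Finset (Fin m)), w ≠ a → (w ∈ T.erase a ↔ w ∈ T) :=
    fun w T hw => Finset.mem_erase.trans (by simp [hw])
  refine ⟨b, u, v, hbu, hbv, huv, T1, hT1, T2, hT2, T3, hT3, T4, hT4, ?_, ?_, ?_, ?_⟩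
  · exact ⟨(lift b T1 hba).1 p1.1, (lift u T1 hua).1 p1.2.1, fun h => p1.2.2 ((lift v T1 hva).2 h)⟩
  · exact ⟨(lift b T2 hba).1 p2.1, fun h => p2.2.1 ((lift u T2 hua).2 h), (lift v T2 hva).1 p2.2.2⟩
  · exact ⟨fun h => p3.1 ((lift b T3 hba).2 h), (lift u T3 hua).1 p3.2.1,
      fun h => p3.2.2 ((lift v T3 hva).2 h)⟩
  · exact ⟨fun h => p4.1 ((lift b T4 hba).2 h), fun h => p4.2.1 ((lift u T4 hua).2 h),
      (lift v T4 hva).1 p4.2.2⟩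

lemma fcomp_of_image_erase {F : Fam m} {a x y : Fin m} (hx : x ≠ a) (hy : y ≠ a)
    (h : fcomp (F.image (fun S => S.erase a)) x y) : fcomp F x y := by
  have key : ∀ u v : Fin m, u ≠ a → v ≠ a →
      fsub (F.image (fun S => S.erase a)) u v → fsub F u v := by
    intro u v hu hv hsub S hS huS
    have h1 : u ∈ S.erase a := Finset.mem_erase.2 ⟨hu, huS⟩
    have h2 : v ∈ S.erase a :=
      hsub (S.erase a) (Finset.mem_image.2 ⟨S, hS, rfl⟩) h1
    exact (Finset.mem_erase.1 h2).2
  rcases h with h | h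
  · exact Or.inl (key x y hx hy h)
  · exact Or.inr (key y x hy hx h)

/-- helper for the base case: exhibit F2 from the quadruple {a,u},{a,v},{u},{v}. -/
lemma base_quad {F : Fam m} {V : Finset (Fin m)} {a u v : Fin m}
    (haV : a ∈ V) (huV : u ∈ V) (hvV : v ∈ V)
    (hau : a ≠ u) (hav : a ≠ v) (huv : u ≠ v)
    (hmem : ∀ T : Finset (Fin m), T ⊆ V → ((u ∈ T ↔ v ∈ T) ∨ T ∈ F)) : HasF2 F := by
  have hsub1 : ({a, u} : Finset (Fin m)) ⊆ V := by
    intro w hw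
    simp only [Finset.mem_insert, Finset.mem_singleton] at hw
    rcases hw with rfl | rfl <;> assumption
  have hsub2 : ({a, v} : Finset (Fin m)) ⊆ V := by
    intro w hw
    simp only [Finset.mem_insert, Finset.mem_singleton] at hw
    rcases hw with rfl | rfl <;> assumption
  have g1 : ({a, u} : Finset (Fin m)) ∈ F := by
    rcases hmem {a, u} hsub1 with h | h
    · exfalso
      have hv := h.1 (by simp)
      simp only [Finset.mem_insert, Finset.mem_singleton] at hv
      exact hv.elim (fun e => hav e.symm) (fun e => huv e.symm)
    · exact h
  have g2 : ({a, v} : Finset (Fin m)) ∈ F := by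
    rcases hmem {a, v} hsub2 with h | h
    · exfalso
      have hu := h.2 (by simp)
      simp only [Finset.mem_insert, Finset.mem_singleton] at hu
      exact hu.elim (fun e => hau e.symm) (fun e => huv e)
    · exact h
  have g3 : ({u} : Finset (Fin m)) ∈ F := by
    rcases hmem {u} (Finset.singleton_subset_iff.2 huV) with h | h
    · exfalso
      have hv := h.1 (by simp)
      rw [Finset.mem_singleton] at hv
      exact huv hv.symm
    · exact h
  have g4 : ({v} : Finset (Fin m)) ∈ F := by
    rcases hmem {v} (Finset.singleton_subset_iff.2 hvV) with h | h
    · exfalso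
      have hu := h.2 (by simp)
      rw [Finset.mem_singleton] at hu
      exact huv hu
    · exact h
  refine ⟨a, u, v, hau, hav, huv, {a, u}, g1, {a, v}, g2, {u}, g3, {v}, g4, ?_, ?_, ?_, ?_⟩
  · exact ⟨by simp, by simp, by simp [Ne.symm hav, Ne.symm huv]⟩
  · exact ⟨by simp, by simp [Ne.symm hau, huv], by simp⟩
  · exact ⟨by simp [hau], by simp, by simp [Ne.symm huv]⟩
  · exact ⟨by simp [hav], by simp [huv], by simp⟩

/-- Square identity needed for the induction. -/
lemma sq_step (M : ℕ) (hM : 1 ≤ M) : (M - 1 + 1)^2/4 + 2 + (M + 1)/2 = (M + 1)^2/4 + 2 := by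
  have h1 : M - 1 + 1 = M := by omega
  rw [h1]
  rcases Nat.even_or_odd M with ⟨r, hr⟩ | ⟨r, hr⟩
  · obtain ⟨k, hk⟩ : ∃ k, k = r * r := ⟨_, rfl⟩
    have e1 : (M+1)^2 = 4*k + 4*r + 1 := by subst hr hk; ring
    have e2 : M^2 = 4*k := by subst hr hk; ring
    have e3 : M = 2*r := by omega
    omega
  · obtain ⟨k, hk⟩ : ∃ k, k = r * r := ⟨_, rfl⟩
    have e1 : (M+1)^2 = 4*k + 8*r + 4 := by subst hr hk; ring
    have e2 : M^2 = 4*k + 4*r + 1 := by subst hr hk; ring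
    have e3 : M = 2*r + 1 := hr
    omega

/-- The h-bound: a family with a 3-antichain of rows has at most (|V|+1)²/4 + 2 columns. -/
lemma hbound : ∀ (N : ℕ) (V : Finset (Fin m)) (F : Fam m), V.card ≤ N →
    (∀ S ∈ F, S ⊆ V) → ¬ HasF2 F →
    ∀ x y z : Fin m, ¬ fcomp F x y → ¬ fcomp F x z → ¬ fcomp F y z →
    F.card ≤ (V.card + 1)^2/4 + 2 := by
  intro N
  induction N with
  | zero =>
    intro V F hcard hFV hF2 x y z hxy hxz hyz
    obtain ⟨⟨S, hS, hxS, _⟩, _⟩ := not_fcomp_witness hxy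
    have : x ∈ V := hFV S hS hxS
    have := Finset.card_pos.2 ⟨x, this⟩
    omega
  | succ N ih =>
    intro V F hcard hFV hF2 x y z hxy hxz hyz
    classical
    have hxV : x ∈ V := by
      obtain ⟨⟨S, hS, hxS, _⟩, _⟩ := not_fcomp_witness hxy
      exact hFV S hS hxS
    have hyV : y ∈ V := by
      obtain ⟨_, ⟨S, hS, hyS, _⟩⟩ := not_fcomp_witness hxy
      exact hFV S hS hyS
    have hzV : z ∈ V := by
      obtain ⟨_, ⟨S, hS, hzS, _⟩⟩ := not_fcomp_witness hxz
      exact hFV S hS hzS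
    have hxyne : x ≠ y := ne_of_not_fcomp hxy
    have hxzne : x ≠ z := ne_of_not_fcomp hxz
    have hyzne : y ≠ z := ne_of_not_fcomp hyz
    by_cases h4 : 4 ≤ V.card
    · -- inductive step
      obtain ⟨a, haV, hax, hay, haz, hta⟩ := lemS hFV hF2 hxV hyV hzV hxy hxz hyz h4
      set F' := F.image (fun S => S.erase a) with hF'
      set V' := V.erase a with hV'
      have hV'card : V'.card = V.card - 1 := by
        rw [hV']; exact Finset.card_erase_of_mem haV
      have hIH : F'.card ≤ (V'.card + 1)^2/4 + 2 := by
        apply ih V' F' (by omega)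
        · intro S' hS'
          obtain ⟨S, hS, rfl⟩ := Finset.mem_image.1 hS'
          rw [hV']
          exact Finset.erase_subset_erase a (hFV S hS)
        · intro hc; exact hF2 (hasF2_of_image_erase hc)
        · exact fun hc => hxy (fcomp_of_image_erase (Ne.symm hax) (Ne.symm hay) hc)
        · exact fun hc => hxz (fcomp_of_image_erase (Ne.symm hax) (Ne.symm haz) hc)
        · exact fun hc => hyz (fcomp_of_image_erase (Ne.symm hay) (Ne.symm haz) hc)
      have hdel := card_le_image_erase (F := F) a
      rw [← hF'] at hdel
      have hstep := sq_step V.card (by omega)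
      rw [hV'card] at hIH
      omega
    · -- base case : |V| = 3
      have hsub : ({x, y, z} : Finset (Fin m)) ⊆ V := by
        intro w hw
        simp only [Finset.mem_insert, Finset.mem_singleton] at hw
        rcases hw with rfl | rfl | rfl <;> assumption
      have hcard3 : ({x, y, z} : Finset (Fin m)).card = 3 := by
        rw [Finset.card_insert_of_notMem (by simp [hxyne, hxzne]),
            Finset.card_insert_of_notMem (by simp [hyzne]), Finset.card_singleton]
      have hVcard : V.card = 3 := by
        have := Finset.card_le_card hsub
        omega
      have hbound6 : (V.card + 1)^2/4 + 2 = 6 := by rw [hVcard]; norm_num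
      rw [hbound6]
      by_contra hbig
      push_neg at hbig
      have hFP : F ⊆ V.powerset := fun S hS => Finset.mem_powerset.2 (hFV S hS)
      have hPcard : V.powerset.card = 8 := by
        rw [Finset.card_powerset, hVcard]; norm_num
      have hMcard : (V.powerset \ F).card ≤ 1 := by
        rw [Finset.card_sdiff_of_subset hFP]
        omega
      have key : ∃ u v a : Fin m, a ≠ u ∧ a ≠ v ∧ u ≠ v ∧ a ∈ V ∧ u ∈ V ∧ v ∈ V ∧
          (∀ T : Finset (Fin m), T ⊆ V → T ∉ F → (u ∈ T ↔ v ∈ T)) := by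
        rcases Finset.eq_empty_or_nonempty (V.powerset \ F) with hM | hM
        · refine ⟨x, y, z, hxzne.symm, hyzne.symm, hxyne, hzV, hxV, hyV, ?_⟩
          intro T hT hTF
          exact absurd (Finset.eq_empty_iff_forall_notMem.1 hM T
            (Finset.mem_sdiff.2 ⟨Finset.mem_powerset.2 hT, hTF⟩)) (fun h => h)
        · obtain ⟨W, hW⟩ := hM
          have huniq : ∀ T : Finset (Fin m), T ⊆ V → T ∉ F → T = W := by
            intro T hT hTF
            exact Finset.card_le_one.1 hMcard T
              (Finset.mem_sdiff.2 ⟨Finset.mem_powerset.2 hT, hTF⟩) W hW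
          by_cases hxW : x ∈ W
          · by_cases hyW : y ∈ W
            · exact ⟨x, y, z, hxzne.symm, hyzne.symm, hxyne, hzV, hxV, hyV,
                fun T hT hTF => by rw [huniq T hT hTF]; simp [hxW, hyW]⟩
            · by_cases hzW : z ∈ W
              · exact ⟨x, z, y, hxyne.symm, hyzne, hxzne, hyV, hxV, hzV,
                  fun T hT hTF => by rw [huniq T hT hTF]; simp [hxW, hzW]⟩
              · exact ⟨y, z, x, hxyne, hxzne, hyzne, hxV, hyV, hzV,
                  fun T hT hTF => by rw [huniq T hT hTF]; simp [hyW, hzW]⟩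
          · by_cases hyW : y ∈ W
            · by_cases hzW : z ∈ W
              · exact ⟨y, z, x, hxyne, hxzne, hyzne, hxV, hyV, hzV,
                  fun T hT hTF => by rw [huniq T hT hTF]; simp [hyW, hzW]⟩
              · exact ⟨x, z, y, hxyne.symm, hyzne, hxzne, hyV, hxV, hzV,
                  fun T hT hTF => by rw [huniq T hT hTF]; simp [hxW, hzW]⟩
            · exact ⟨x, y, z, hxzne.symm, hyzne.symm, hxyne, hzV, hxV, hyV,
                fun T hT hTF => by rw [huniq T hT hTF]; simp [hxW, hyW]⟩
      obtain ⟨u, v, a, hau, hav, huv, haV, huV, hvV, hcond⟩ := key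
      exact hF2 (base_quad haV huV hvV hau hav huv (fun T hT => by
        by_cases hTF : T ∈ F
        · exact Or.inr hTF
        · exact Or.inl (hcond T hT hTF)))

section Galvin

variable {α : Type*} [DecidableEq α] (r : α → α → Prop)

/-- Assembly step for Galvin's proof. -/
lemma galvin_assemble (href : ∀ x, r x x) (htr : ∀ {x y z}, r x y → r y z → r x z)
    (V : Finset α) (a : α) (K' L' : Finset α) (a1 : α)
    (haV : a ∈ V)
    (hcover : V.erase a ⊆ K' ∪ L') (hK's : K' ⊆ V.erase a) (hL's : L' ⊆ V.erase a)
    (hKc : ∀ x ∈ K', ∀ y ∈ K', r x y ∨ r y x) (hLc : ∀ x ∈ L', ∀ y ∈ L', r x y ∨ r y x)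
    (ha1 : a1 ∈ K') (hra1a : r a1 a)
    (habove : ∀ y ∈ K', (∃ w ∈ V.erase a, ¬ r y w ∧ ¬ r w y) → r y a1) :
    ∃ K L : Finset α, V ⊆ K ∪ L ∧
      (∀ x ∈ K, ∀ y ∈ K, r x y ∨ r y x) ∧ (∀ x ∈ L, ∀ y ∈ L, r x y ∨ r y x) := by
  classical
  refine ⟨(K'.filter (fun y => r y a1)) ∪ {a}, L' ∪ (K'.filter (fun y => ¬ r y a1)), ?_, ?_, ?_⟩
  · intro w hw
    by_cases hwa : w = a
    · subst hwa
      exact Finset.mem_union_left _ (Finset.mem_union_right _ (Finset.mem_singleton_self _))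
    · have hw' : w ∈ K' ∪ L' := hcover (Finset.mem_erase.2 ⟨hwa, hw⟩)
      rcases Finset.mem_union.1 hw' with hwK | hwL
      · by_cases hc : r w a1
        · exact Finset.mem_union_left _
            (Finset.mem_union_left _ (Finset.mem_filter.2 ⟨hwK, hc⟩))
        · exact Finset.mem_union_right _
            (Finset.mem_union_right _ (Finset.mem_filter.2 ⟨hwK, hc⟩))
      · exact Finset.mem_union_right _ (Finset.mem_union_left _ hwL)
  · intro x hx y hy
    simp only [Finset.mem_union, Finset.mem_filter, Finset.mem_singleton] at hx hy
    rcases hx with ⟨hxK, hxr⟩ | hxa <;> rcases hy with ⟨hyK, hyr⟩ | hya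
    · exact hKc x hxK y hyK
    · subst hya; exact Or.inl (htr hxr hra1a)
    · subst hxa; exact Or.inr (htr hyr hra1a)
    · subst hxa; subst hya; exact Or.inl (href _)
  · intro x hx y hy
    simp only [Finset.mem_union, Finset.mem_filter] at hx hy
    have comp_all : ∀ u, u ∈ K' → ¬ r u a1 → ∀ w ∈ V.erase a, r u w ∨ r w u := by
      intro u huK hur w hw
      by_contra hc
      push_neg at hc
      exact hur (habove u huK ⟨w, hw, hc.1, hc.2⟩)
    rcases hx with hxL | ⟨hxK, hxr⟩ <;> rcases hy with hyL | ⟨hyK, hyr⟩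
    · exact hLc x hxL y hyL
    · exact (comp_all y hyK hyr x (hL's hxL)).symm
    · exact (comp_all x hxK hxr y (hL's hyL))
    · exact hKc x hxK y hyK

/-- Dilworth for width 2 (Galvin's argument): no 3-antichain implies a cover by two chains. -/
lemma galvin_main [DecidableRel r] (href : ∀ x, r x x) (htr : ∀ {x y z}, r x y → r y z → r x z) :
    ∀ (N : ℕ) (V : Finset α), V.card ≤ N →
    (∀ x ∈ V, ∀ y ∈ V, ∀ z ∈ V,
      (¬ r x y ∧ ¬ r y x) → (¬ r x z ∧ ¬ r z x) → (¬ r y z ∧ ¬ r z y) → False) →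
    ∃ K L : Finset α, V ⊆ K ∪ L ∧
      (∀ x ∈ K, ∀ y ∈ K, r x y ∨ r y x) ∧ (∀ x ∈ L, ∀ y ∈ L, r x y ∨ r y x) := by
  intro N
  induction N with
  | zero =>
    intro V hV _
    have : V = ∅ := Finset.card_eq_zero.1 (by omega)
    subst this
    exact ⟨∅, ∅, by simp, by simp, by simp⟩
  | succ N ih =>
    intro V hV h3
    classical
    rcases V.eq_empty_or_nonempty with rfl | hne
    · exact ⟨∅, ∅, by simp, by simp, by simp⟩
    -- weight function and maximal element machinery
    set f : α → ℕ := fun x => (V.filter (fun w => r w x)).card with hf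
    have hkey : ∀ (s : Finset α), s ⊆ V → ∀ a1 ∈ s, (∀ b ∈ s, f b ≤ f a1) →
        ∀ b ∈ s, r a1 b → r b a1 := by
      intro s hsV a1 ha1 hmax b hb hab
      have hsub : V.filter (fun w => r w a1) ⊆ V.filter (fun w => r w b) := by
        intro w hw
        rw [Finset.mem_filter] at hw ⊢
        exact ⟨hw.1, htr hw.2 hab⟩
      have hcard : f b ≤ f a1 := hmax b hb
      have heq : V.filter (fun w => r w a1) = V.filter (fun w => r w b) :=
        Finset.eq_of_subset_of_card_le hsub hcard
      have : b ∈ V.filter (fun w => r w b) := Finset.mem_filter.2 ⟨hsV hb, href b⟩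
      rw [← heq, Finset.mem_filter] at this
      exact this.2
    obtain ⟨a, haV, hamax⟩ := Finset.exists_max_image V f hne
    have hamax' : ∀ v ∈ V, r a v → r v a := hkey V (le_refl _) a haV hamax
    set P' := V.erase a with hP'
    have hP'card : P'.card ≤ N := by
      rw [hP', Finset.card_erase_of_mem haV]; omega
    obtain ⟨K', L', hcover, hKc, hLc⟩ := ih P' hP'card (by
      intro x hx y hy z hz
      exact h3 x (Finset.mem_of_mem_erase hx) y (Finset.mem_of_mem_erase hy)
        z (Finset.mem_of_mem_erase hz))
    -- shrink to subsets of P'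
    set K := K' ∩ P' with hK
    set L := L' ∩ P' with hL
    have hcover' : P' ⊆ K ∪ L := by
      intro w hw
      rcases Finset.mem_union.1 (hcover hw) with h | h
      · exact Finset.mem_union_left _ (Finset.mem_inter.2 ⟨h, hw⟩)
      · exact Finset.mem_union_right _ (Finset.mem_inter.2 ⟨h, hw⟩)
    have hKs : K ⊆ P' := Finset.inter_subset_right
    have hLs : L ⊆ P' := Finset.inter_subset_right
    have hKc' : ∀ x ∈ K, ∀ y ∈ K, r x y ∨ r y x :=
      fun x hx y hy => hKc x (Finset.mem_inter.1 hx).1 y (Finset.mem_inter.1 hy).1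
    have hLc' : ∀ x ∈ L, ∀ y ∈ L, r x y ∨ r y x :=
      fun x hx y hy => hLc x (Finset.mem_inter.1 hx).1 y (Finset.mem_inter.1 hy).1
    -- the set of elements of P' belonging to a 2-antichain
    set U := P'.filter (fun u => ∃ w ∈ P', ¬ r u w ∧ ¬ r w u) with hU
    rcases U.eq_empty_or_nonempty with hUe | hUne
    · -- P' is a single chain
      refine ⟨P', {a}, ?_, ?_, ?_⟩
      · intro w hw
        by_cases hwa : w = a
        · subst hwa; exact Finset.mem_union_right _ (Finset.mem_singleton_self _)
        · exact Finset.mem_union_left _ (Finset.mem_erase.2 ⟨hwa, hw⟩)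
      · intro x hx y hy
        by_contra hc
        push_neg at hc
        have : x ∈ U := Finset.mem_filter.2 ⟨hx, ⟨y, hy, hc.1, hc.2⟩⟩
        rw [hUe] at this
        exact absurd this (Finset.notMem_empty _)
      · intro x hx y hy
        rw [Finset.mem_singleton] at hx hy
        subst hx; subst hy
        exact Or.inl (href _)
    · -- there are antichain elements on both sides
      obtain ⟨u1, hu1⟩ := hUne
      have hu1' := Finset.mem_filter.1 hu1
      obtain ⟨w1, hw1P, hw1a, hw1b⟩ := hu1'.2
      have hw1U : w1 ∈ U := Finset.mem_filter.2 ⟨hw1P, ⟨u1, hu1'.1, hw1b, hw1a⟩⟩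
      have hsides : ∃ uK ∈ U ∩ K, ∃ uL ∈ U ∩ L, True := by
        rcases Finset.mem_union.1 (hcover' hu1'.1) with h | h
        · rcases Finset.mem_union.1 (hcover' hw1P) with h' | h'
          · exact absurd (hKc' u1 h w1 h') (by push_neg; exact ⟨hw1a, hw1b⟩)
          · exact ⟨u1, Finset.mem_inter.2 ⟨hu1, h⟩, w1, Finset.mem_inter.2 ⟨hw1U, h'⟩, trivial⟩
        · rcases Finset.mem_union.1 (hcover' hw1P) with h' | h'
          · exact ⟨w1, Finset.mem_inter.2 ⟨hw1U, h'⟩, u1, Finset.mem_inter.2 ⟨hu1, h⟩, trivial⟩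
          · exact absurd (hLc' u1 h w1 h') (by push_neg; exact ⟨hw1a, hw1b⟩)
      obtain ⟨uK, huK, uL, huL, _⟩ := hsides
      obtain ⟨a1, ha1, hmax1⟩ := Finset.exists_max_image (U ∩ K) f ⟨uK, huK⟩
      obtain ⟨a2, ha2, hmax2⟩ := Finset.exists_max_image (U ∩ L) f ⟨uL, huL⟩
      have hUKV : U ∩ K ⊆ V := fun w hw =>
        Finset.mem_of_mem_erase (hKs (Finset.mem_inter.1 hw).2)
      have hULV : U ∩ L ⊆ V := fun w hw =>
        Finset.mem_of_mem_erase (hLs (Finset.mem_inter.1 hw).2)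
      have pm1 : ∀ b ∈ U ∩ K, r a1 b → r b a1 := hkey (U ∩ K) hUKV a1 ha1 hmax1
      have pm2 : ∀ b ∈ U ∩ L, r a2 b → r b a2 := hkey (U ∩ L) hULV a2 ha2 hmax2
      have ha1K : a1 ∈ K := (Finset.mem_inter.1 ha1).2
      have ha2L : a2 ∈ L := (Finset.mem_inter.1 ha2).2
      -- habove for the K side
      have haboveK : ∀ y ∈ K, (∃ w ∈ P', ¬ r y w ∧ ¬ r w y) → r y a1 := by
        intro y hy hw
        have hyU : y ∈ U ∩ K := Finset.mem_inter.2 ⟨Finset.mem_filter.2 ⟨hKs hy, hw⟩, hy⟩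
        rcases hKc' y hy a1 ha1K with h | h
        · exact h
        · exact pm1 y hyU h
      have haboveL : ∀ y ∈ L, (∃ w ∈ P', ¬ r y w ∧ ¬ r w y) → r y a2 := by
        intro y hy hw
        have hyU : y ∈ U ∩ L := Finset.mem_inter.2 ⟨Finset.mem_filter.2 ⟨hLs hy, hw⟩, hy⟩
        rcases hLc' y hy a2 ha2L with h | h
        · exact h
        · exact pm2 y hyU h
      -- a1 and a2 are incomparable
      have hinc : ¬ r a1 a2 ∧ ¬ r a2 a1 := by
        constructor
        · intro h12
          have ha2U := (Finset.mem_inter.1 ha2).1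
          obtain ⟨w, hwP, hwa, hwb⟩ := (Finset.mem_filter.1 ha2U).2
          have hwK : w ∈ K := by
            rcases Finset.mem_union.1 (hcover' hwP) with h | h
            · exact h
            · exact absurd (hLc' a2 ha2L w h) (by push_neg; exact ⟨hwa, hwb⟩)
          have hcomp := hKc' w hwK a1 ha1K
          have hwU : w ∈ U ∩ K :=
            Finset.mem_inter.2 ⟨Finset.mem_filter.2
              ⟨hwP, ⟨a2, (Finset.mem_filter.1 ha2U).1, hwb, hwa⟩⟩, hwK⟩
          rcases hcomp with h | h
          · exact hwb (htr h h12)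
          · exact hwb (htr (pm1 w hwU h) h12)
        · intro h21
          have ha1U := (Finset.mem_inter.1 ha1).1
          obtain ⟨w, hwP, hwa, hwb⟩ := (Finset.mem_filter.1 ha1U).2
          have hwL : w ∈ L := by
            rcases Finset.mem_union.1 (hcover' hwP) with h | h
            · exact absurd (hKc' a1 ha1K w h) (by push_neg; exact ⟨hwa, hwb⟩)
            · exact h
          have hcomp := hLc' w hwL a2 ha2L
          have hwU : w ∈ U ∩ L :=
            Finset.mem_inter.2 ⟨Finset.mem_filter.2
              ⟨hwP, ⟨a1, (Finset.mem_filter.1 ha1U).1, hwb, hwa⟩⟩, hwL⟩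
          rcases hcomp with h | h
          · exact hwb (htr h h21)
          · exact hwb (htr (pm2 w hwU h) h21)
      -- a is comparable with a1 or a2
      have ha1V : a1 ∈ V := hUKV ha1
      have ha2V : a2 ∈ V := hULV ha2
      have hacomp : (r a a1 ∨ r a1 a) ∨ (r a a2 ∨ r a2 a) := by
        by_contra hc
        push_neg at hc
        exact h3 a haV a1 ha1V a2 ha2V ⟨hc.1.1, hc.1.2⟩ ⟨hc.2.1, hc.2.2⟩ hinc
      rcases hacomp with h | h
      · have hra1a : r a1 a := by
          rcases h with h | h
          · exact hamax' a1 ha1V h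
          · exact h
        exact galvin_assemble r href htr V a K L a1 haV hcover' hKs hLs hKc' hLc'
          ha1K hra1a haboveK
      · have hra2a : r a2 a := by
          rcases h with h | h
          · exact hamax' a2 ha2V h
          · exact h
        obtain ⟨KK, LL, hc1, hc2, hc3⟩ :=
          galvin_assemble r href htr V a L K a2 haV
            (by rw [Finset.union_comm]; exact hcover') hLs hKs hLc' hKc' ha2L hra2a haboveL
        exact ⟨KK, LL, hc1, hc2, hc3⟩

end Galvin

section Bridge

variable {n : ℕ}

/-- The row-subsets determined by the columns of A. -/
def colFam (A : Fin m → Fin n → Bool) : Fam m :=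
  Finset.univ.image (fun j => Finset.univ.filter (fun i => A i j = true))

def rsub (A : Fin m → Fin n → Bool) (x y : Fin m) : Prop :=
  ∀ j, A x j = true → A y j = true

instance (A : Fin m → Fin n → Bool) (x y : Fin m) : Decidable (rsub A x y) := by
  unfold rsub; infer_instance

lemma fsub_colFam_iff (A : Fin m → Fin n → Bool) (x y : Fin m) :
    fsub (colFam A) x y ↔ rsub A x y := by
  constructor
  · intro h j hA
    have hmem : (Finset.univ.filter (fun i => A i j = true)) ∈ colFam A :=
      Finset.mem_image.2 ⟨j, Finset.mem_univ _, rfl⟩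
    have := h _ hmem (Finset.mem_filter.2 ⟨Finset.mem_univ _, hA⟩)
    exact (Finset.mem_filter.1 this).2
  · intro h S hS hx
    obtain ⟨j, _, rfl⟩ := Finset.mem_image.1 hS
    exact Finset.mem_filter.2 ⟨Finset.mem_univ _, h j (Finset.mem_filter.1 hx).2⟩

lemma bool_eq_false_of_ne {b : Bool} (h : ¬ b = true) : b = false := by
  cases b
  · rfl
  · exact absurd rfl h

lemma card_colFam (A : Fin m → Fin n → Bool) (hS : Simple A) : (colFam A).card = n := by
  rw [colFam, Finset.card_image_of_injective _ ?_, Finset.card_univ, Fintype.card_fin]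
  intro j j' he
  dsimp only at he
  apply hS
  funext i
  show A i j = A i j'
  have hi : A i j = true ↔ A i j' = true := by
    constructor
    · intro hb
      have : i ∈ Finset.univ.filter (fun i => A i j' = true) := by
        rw [← he]; exact Finset.mem_filter.2 ⟨Finset.mem_univ _, hb⟩
      exact (Finset.mem_filter.1 this).2
    · intro hb
      have : i ∈ Finset.univ.filter (fun i => A i j = true) := by
        rw [he]; exact Finset.mem_filter.2 ⟨Finset.mem_univ _, hb⟩
      exact (Finset.mem_filter.1 this).2
  by_cases hb : A i j = true
  · rw [hb, (hi.1 hb)]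
  · rw [bool_eq_false_of_ne hb, bool_eq_false_of_ne (fun hb' => hb (hi.2 hb'))]

lemma isConfig_of_hasF2 {A : Fin m → Fin n → Bool} (hS : Simple A)
    (h : HasF2 (colFam A)) : IsConfig F2 A := by
  obtain ⟨a, u, v, hau, hav, huv, S1, hS1, S2, hS2, S3, hS3, S4, hS4, p1, p2, p3, p4⟩ := h
  obtain ⟨j1, -, rfl⟩ := Finset.mem_image.1 hS1
  obtain ⟨j2, -, rfl⟩ := Finset.mem_image.1 hS2
  obtain ⟨j3, -, rfl⟩ := Finset.mem_image.1 hS3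
  obtain ⟨j4, -, rfl⟩ := Finset.mem_image.1 hS4
  have memtrue : ∀ (w : Fin m) (j : Fin n),
      w ∈ Finset.univ.filter (fun i => A i j = true) → A w j = true :=
    fun w j hw => (Finset.mem_filter.1 hw).2
  have memfalse : ∀ (w : Fin m) (j : Fin n),
      w ∉ Finset.univ.filter (fun i => A i j = true) → A w j = false :=
    fun w j hw => bool_eq_false_of_ne
      (fun hb => hw (Finset.mem_filter.2 ⟨Finset.mem_univ _, hb⟩))
  have e1a := memtrue a j1 p1.1
  have e1u := memtrue u j1 p1.2.1
  have e1v := memfalse v j1 p1.2.2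
  have e2a := memtrue a j2 p2.1
  have e2u := memfalse u j2 p2.2.1
  have e2v := memtrue v j2 p2.2.2
  have e3a := memfalse a j3 p3.1
  have e3u := memtrue u j3 p3.2.1
  have e3v := memfalse v j3 p3.2.2
  have e4a := memfalse a j4 p4.1
  have e4u := memfalse u j4 p4.2.1
  have e4v := memtrue v j4 p4.2.2
  have hj12 : j1 ≠ j2 := fun e => by rw [e, e2u] at e1u; exact Bool.noConfusion e1u
  have hj13 : j1 ≠ j3 := fun e => by rw [e, e3a] at e1a; exact Bool.noConfusion e1a
  have hj14 : j1 ≠ j4 := fun e => by rw [e, e4a] at e1a; exact Bool.noConfusion e1a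
  have hj23 : j2 ≠ j3 := fun e => by rw [e, e3a] at e2a; exact Bool.noConfusion e2a
  have hj24 : j2 ≠ j4 := fun e => by rw [e, e4a] at e2a; exact Bool.noConfusion e2a
  have hj34 : j3 ≠ j4 := fun e => by rw [e, e4u] at e3u; exact Bool.noConfusion e3u
  refine ⟨⟨![a, u, v], ?_⟩, ⟨![j1, j2, j3, j4], ?_⟩, ?_⟩
  · intro s t hst
    fin_cases s <;> fin_cases t <;>
      first
        | rfl
        | exact absurd hst hau | exact absurd hst hav | exact absurd hst huv
        | exact absurd hst.symm hau | exact absurd hst.symm hav | exact absurd hst.symm huv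
  · intro s t hst
    fin_cases s <;> fin_cases t <;>
      first
        | rfl
        | exact absurd hst hj12 | exact absurd hst hj13 | exact absurd hst hj14
        | exact absurd hst hj23 | exact absurd hst hj24 | exact absurd hst hj34
        | exact absurd hst.symm hj12 | exact absurd hst.symm hj13 | exact absurd hst.symm hj14
        | exact absurd hst.symm hj23 | exact absurd hst.symm hj24 | exact absurd hst.symm hj34
  · intro i j
    fin_cases i <;> fin_cases j <;>
      first
        | exact e1a.symm | exact e1u.symm | exact e1v.symm
        | exact e2a.symm | exact e2u.symm | exact e2v.symm
        | exact e3a.symm | exact e3u.symm | exact e3v.symm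
        | exact e4a.symm | exact e4u.symm | exact e4v.symm

end Bridge

/-- parity fact -/
lemma sq_div_four (M : ℕ) : M^2 ≤ 4*(M^2/4) + 1 := by
  have h := Nat.div_mul_le_self (M^2) 4
  rcases Nat.even_or_odd M with ⟨r, hr⟩ | ⟨r, hr⟩
  · obtain ⟨k, hk⟩ : ∃ k, k = r * r := ⟨_, rfl⟩
    have e : M^2 = 4*k := by subst hr hk; ring
    omega
  · obtain ⟨k, hk⟩ : ∃ k, k = r * r := ⟨_, rfl⟩
    have e : M^2 = 4*k + 4*r + 1 := by subst hr hk; ring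
    omega

/-- Rank function for a chain of rows. -/
lemma embed_rank {n : ℕ} (A : Fin m → Fin n → Bool) (B : Finset (Fin m))
    (hchain : ∀ x ∈ B, ∀ y ∈ B, rsub A x y ∨ rsub A y x) :
    ∃ g : Fin m → ℕ, (∀ i ∈ B, g i < B.card) ∧
      (∀ x ∈ B, ∀ y ∈ B, g x = g y → x = y) ∧
      (∀ (j : Fin n), ∀ i ∈ B,
        (A i j = true ↔ g i < (B.filter (fun x => A x j = true)).card)) := by
  classical
  set w : Fin m → ℕ := fun x => (Finset.univ.filter (fun j => A x j = true)).card with hw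
  set key : Fin m → ℕ := fun x => (n - w x) * m + x.val with hkey
  have hwle : ∀ x, w x ≤ n := by
    intro x
    rw [hw]
    exact le_trans (Finset.card_filter_le _ _) (by simp)
  have hkeyinj : ∀ x y : Fin m, key x = key y → x = y := by
    intro x y he
    rw [hkey] at he
    dsimp only at he
    have hx : x.val < m := x.isLt
    have hy : y.val < m := y.isLt
    have main : ∀ u v : Fin m, (n - w u) ≤ (n - w v) →
        (n - w u) * m + u.val = (n - w v) * m + v.val → u.val = v.val := by
      intro u v hle heq
      obtain ⟨d, hd⟩ := Nat.exists_eq_add_of_le hle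
      have he2 : u.val = d * m + v.val := by
        have h3 : (n - w u) * m + u.val = (n - w u) * m + (d * m + v.val) := by
          rw [heq, hd]; ring
        omega
      have hum := u.isLt
      have hdm : d = 0 ∨ m ≤ d * m := by
        rcases Nat.eq_zero_or_pos d with h0 | h0
        · exact Or.inl h0
        · exact Or.inr (Nat.le_mul_of_pos_left m h0)
      rcases hdm with h0 | h0
      · rw [h0] at he2; omega
      · omega
    have hv : x.val = y.val := by
      rcases Nat.le_total (n - w x) (n - w y) with hle | hle
      · exact main x y hle he
      · exact (main y x hle he.symm).symm
    exact Fin.ext hv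
  have hkeylt : ∀ (x y : Fin m) (j : Fin n), A x j = true → ¬ A y j = true →
      rsub A y x → key x < key y := by
    intro x y j hx hy hsub
    have hss : Finset.univ.filter (fun j => A y j = true) ⊂
        Finset.univ.filter (fun j => A x j = true) := by
      constructor
      · intro j' hj'
        rw [Finset.mem_filter] at hj' ⊢
        exact ⟨Finset.mem_univ _, hsub j' hj'.2⟩
      · intro hsup
        exact hy (Finset.mem_filter.1 (hsup (Finset.mem_filter.2 ⟨Finset.mem_univ _, hx⟩))).2
    have hwlt : w y < w x := Finset.card_lt_card hss
    rw [hkey]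
    dsimp only
    have hxm := x.isLt
    have hym := y.isLt
    have h1 : n - w x + 1 ≤ n - w y := by
      have := hwle x
      omega
    calc (n - w x) * m + x.val < (n - w x) * m + m := by omega
    _ = ((n - w x) + 1) * m := by ring
    _ ≤ (n - w y) * m := Nat.mul_le_mul_right m h1
    _ ≤ (n - w y) * m + y.val := Nat.le_add_right _ _
  set g : Fin m → ℕ := fun i => (B.filter (fun x => key x < key i)).card with hg
  refine ⟨g, ?_, ?_, ?_⟩
  · intro i hi
    have hsub : B.filter (fun x => key x < key i) ⊆ B.erase i := by
      intro x hx
      rw [Finset.mem_filter] at hx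
      refine Finset.mem_erase.2 ⟨?_, hx.1⟩
      intro e
      rw [e] at hx
      exact lt_irrefl _ hx.2
    have h1 := Finset.card_le_card hsub
    rw [Finset.card_erase_of_mem hi] at h1
    have hpos : 0 < B.card := Finset.card_pos.2 ⟨i, hi⟩
    rw [hg]
    dsimp only
    omega
  · have hmono : ∀ x ∈ B, ∀ y ∈ B, key x < key y → g x < g y := by
      intro x hx y hy hxy
      apply Finset.card_lt_card
      constructor
      · intro z hz
        rw [Finset.mem_filter] at hz ⊢
        exact ⟨hz.1, lt_trans hz.2 hxy⟩
      · intro hsup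
        have : x ∈ B.filter (fun z => key z < key x) :=
          hsup (Finset.mem_filter.2 ⟨hx, hxy⟩)
        exact lt_irrefl _ (Finset.mem_filter.1 this).2
    intro x hx y hy he
    rcases lt_trichotomy (key x) (key y) with h | h | h
    · exact absurd he (Nat.ne_of_lt (hmono x hx y hy h))
    · exact hkeyinj x y h
    · exact absurd he.symm (Nat.ne_of_lt (hmono y hy x hx h))
  · intro j i hi
    constructor
    · intro hA
      apply Finset.card_lt_card
      constructor
      · intro x hx
        rw [Finset.mem_filter] at hx ⊢
        refine ⟨hx.1, ?_⟩
        by_contra hAx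
        rcases hchain x hx.1 i hi with hs | hs
        · exact absurd hx.2 (not_lt_of_ge (le_of_lt (hkeylt i x j hA hAx hs)))
        · exact hAx (hs j hA)
      · intro hsup
        have : i ∈ B.filter (fun x => key x < key i) :=
          hsup (Finset.mem_filter.2 ⟨hi, hA⟩)
        exact lt_irrefl _ (Finset.mem_filter.1 this).2
    · intro hlt
      by_contra hA
      have hsub : B.filter (fun x => A x j = true) ⊆ B.filter (fun x => key x < key i) := by
        intro x hx
        rw [Finset.mem_filter] at hx ⊢
        refine ⟨hx.1, ?_⟩
        rcases hchain i hi x hx.1 with hs | hs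
        · exact hkeylt x i j hx.2 hA hs
        · exact absurd (hs j hx.2) hA
      have := Finset.card_le_card hsub
      rw [hg] at hlt
      dsimp only at hlt this
      omega

end Stmt7


open Stmt7 in
/-- Stability for `F₂`: if a simple `m`-rowed matrix `A` avoiding `F₂` has at least
`⌊m²/4⌋ + m + 1 − m/6 + 1` columns, then `A` is a configuration in
`[0_k T_k] × [0_{m−k} T_{m−k}]` where both `k` and `m−k` are at least `m/2 − √(m/6)`. -/
theorem stmt7 (m n : ℕ) (A : Fin m → Fin n → Bool) (hS : Simple A)
    (hav : ¬ IsConfig F2 A)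
    (hn : ((m ^ 2 / 4 + m + 1 : ℕ) : ℝ) - (m : ℝ) / 6 + 1 ≤ (n : ℝ)) :
    ∃ k ≤ m, IsConfig A (triProd k (m - k)) ∧
      (m : ℝ) / 2 - Real.sqrt ((m : ℝ) / 6) ≤ (k : ℝ) ∧
      (m : ℝ) / 2 - Real.sqrt ((m : ℝ) / 6) ≤ ((m - k : ℕ) : ℝ) := by
  classical
  rcases Nat.eq_zero_or_pos m with hm0 | hm
  · -- m = 0 : contradiction with simplicity
    exfalso
    subst hm0
    have hn2 : (2 : ℝ) ≤ (n : ℝ) := by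
      norm_num at hn
      convert hn using 2
      norm_num
    have hn2' : 2 ≤ n := by exact_mod_cast hn2
    have hcols : (fun i : Fin 0 => A i ⟨0, by omega⟩) = (fun i : Fin 0 => A i ⟨1, by omega⟩) :=
      funext (fun i => i.elim0)
    have := hS hcols
    rw [Fin.mk.injEq] at this
    omega
  -- main case
  set F : Fam m := colFam A with hF
  have hcardF : F.card = n := card_colFam A hS
  have hF2 : ¬ HasF2 F := fun h => hav (isConfig_of_hasF2 hS h)
  have hFV : ∀ S ∈ F, S ⊆ Finset.univ := fun S _ => Finset.subset_univ S
  have hrefl : ∀ w : Fin m, rsub A w w := fun w j h => h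
  -- no 3-antichain of rows
  have h3 : ∀ x y z : Fin m, (¬ rsub A x y ∧ ¬ rsub A y x) →
      (¬ rsub A x z ∧ ¬ rsub A z x) → (¬ rsub A y z ∧ ¬ rsub A z y) → False := by
    intro x y z h1 h2 h3'
    have nc : ∀ u v : Fin m, ¬ rsub A u v → ¬ rsub A v u → ¬ fcomp F u v := by
      intro u v ha hb hc
      rcases hc with hc | hc
      · exact ha ((fsub_colFam_iff A u v).1 hc)
      · exact hb ((fsub_colFam_iff A v u).1 hc)
    have hb := hbound m Finset.univ F (by simp) hFV hF2 x y z
      (nc x y h1.1 h1.2) (nc x z h2.1 h2.2) (nc y z h3'.1 h3'.2)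
    rw [Finset.card_univ, Fintype.card_fin, hcardF] at hb
    -- m ≥ 3
    have hxy : x ≠ y := fun e => h1.1 (e ▸ hrefl x)
    have hxz : x ≠ z := fun e => h2.1 (e ▸ hrefl x)
    have hyz : y ≠ z := fun e => h3'.1 (e ▸ hrefl y)
    have hm3 : 3 ≤ m := by
      have hc3 : ({x, y, z} : Finset (Fin m)).card = 3 := by
        rw [Finset.card_insert_of_notMem (by simp [hxy, hxz]),
            Finset.card_insert_of_notMem (by simp [hyz]), Finset.card_singleton]
      have := Finset.card_le_univ ({x, y, z} : Finset (Fin m))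
      rw [hc3, Fintype.card_fin] at this
      exact this
    -- numeric contradiction
    have hc1 : ((m + 1)^2/4 : ℕ) * 4 ≤ (m + 1)^2 := Nat.div_mul_le_self _ 4
    have hc2 : m^2 ≤ 4*(m^2/4) + 1 := sq_div_four m
    have hr1 : (((m + 1)^2/4 + 2 : ℕ) : ℝ) ≤ ((m : ℝ) + 1)^2/4 + 2 := by
      have := (Nat.cast_le (α := ℝ)).2 hc1
      push_cast at this ⊢
      linarith
    have hr2 : ((m : ℝ)^2 - 1)/4 ≤ ((m^2/4 : ℕ) : ℝ) := by
      have := (Nat.cast_le (α := ℝ)).2 hc2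
      push_cast at this
      linarith
    have hrn : (n : ℝ) ≤ (((m + 1)^2/4 + 2 : ℕ) : ℝ) := (Nat.cast_le (α := ℝ)).2 hb
    have hm3r : (3 : ℝ) ≤ (m : ℝ) := by exact_mod_cast hm3
    push_cast at hn
    nlinarith [hn, hr1, hr2, hrn, hm3r]
  -- Dilworth: two chains of rows
  obtain ⟨K0, L0, hcover, hKc, hLc⟩ := galvin_main (rsub A) hrefl
    (fun {x y z} hxy hyz j h => hyz j (hxy j h)) m Finset.univ
    (by simp) (fun x _ y _ z _ => h3 x y z)
  set L1 : Finset (Fin m) := Finset.univ \ K0 with hL1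
  have hL1c : ∀ x ∈ L1, ∀ y ∈ L1, rsub A x y ∨ rsub A y x := by
    intro x hx y hy
    have hx' : x ∈ L0 := by
      rcases Finset.mem_union.1 (hcover (Finset.mem_univ x)) with h | h
      · exact absurd h (Finset.mem_sdiff.1 hx).2
      · exact h
    have hy' : y ∈ L0 := by
      rcases Finset.mem_union.1 (hcover (Finset.mem_univ y)) with h | h
      · exact absurd h (Finset.mem_sdiff.1 hy).2
      · exact h
    exact hLc x hx' y hy'
  set k := K0.card with hk
  have hkm : k ≤ m := by
    have := Finset.card_le_univ K0
    rwa [Fintype.card_fin] at this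
  have hL1card : L1.card = m - k := by
    rw [hL1, Finset.card_sdiff_of_subset (Finset.subset_univ _), Finset.card_univ, Fintype.card_fin]
  obtain ⟨gK, hgK1, hgK2, hgK3⟩ := embed_rank A K0 hKc
  obtain ⟨gL, hgL1, hgL2, hgL3⟩ := embed_rank A L1 hL1c
  have hgL1' : ∀ i, i ∉ K0 → gL i < m - k := by
    intro i hi
    rw [← hL1card]
    exact hgL1 i (Finset.mem_sdiff.2 ⟨Finset.mem_univ _, hi⟩)
  -- row map
  set r : Fin m → Fin k ⊕ Fin (m - k) := fun i =>
    if h : i ∈ K0 then Sum.inl ⟨gK i, hgK1 i h⟩ else Sum.inr ⟨gL i, hgL1' i h⟩ with hr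
  have hrinj : Function.Injective r := by
    intro i i' he
    rw [hr] at he
    dsimp only at he
    by_cases hi : i ∈ K0 <;> by_cases hi' : i' ∈ K0
    · rw [dif_pos hi, dif_pos hi'] at he
      have := Sum.inl.inj he
      rw [Fin.mk.injEq] at this
      exact hgK2 i hi i' hi' this
    · rw [dif_pos hi, dif_neg hi'] at he
      exact absurd he (by simp)
    · rw [dif_neg hi, dif_pos hi'] at he
      exact absurd he (by simp)
    · rw [dif_neg hi, dif_neg hi'] at he
      have := Sum.inr.inj he
      rw [Fin.mk.injEq] at this
      exact hgL2 i (Finset.mem_sdiff.2 ⟨Finset.mem_univ _, hi⟩) i'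
        (Finset.mem_sdiff.2 ⟨Finset.mem_univ _, hi'⟩) this
  -- column map
  have hcKle : ∀ j, (K0.filter (fun x => A x j = true)).card < k + 1 :=
    fun j => Nat.lt_succ_of_le (Finset.card_filter_le _ _)
  have hcLle : ∀ j, (L1.filter (fun x => A x j = true)).card < m - k + 1 := by
    intro j
    apply Nat.lt_succ_of_le
    rw [← hL1card]
    exact Finset.card_filter_le _ _
  set c : Fin n → Fin (k + 1) × Fin (m - k + 1) := fun j =>
    (⟨(K0.filter (fun x => A x j = true)).card, hcKle j⟩,
     ⟨(L1.filter (fun x => A x j = true)).card, hcLle j⟩) with hc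
  have hentry : ∀ i j, A i j = triProd k (m - k) (r i) (c j) := by
    intro i j
    rw [hr, hc]
    dsimp only
    by_cases hi : i ∈ K0
    · rw [dif_pos hi]
      show A i j = decide (gK i < (K0.filter (fun x => A x j = true)).card)
      by_cases hb : A i j = true
      · rw [hb]; exact (decide_eq_true ((hgK3 j i hi).1 hb)).symm
      · rw [bool_eq_false_of_ne hb]
        exact (decide_eq_false (fun hl => hb ((hgK3 j i hi).2 hl))).symm
    · rw [dif_neg hi]
      have hiL : i ∈ L1 := Finset.mem_sdiff.2 ⟨Finset.mem_univ _, hi⟩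
      show A i j = decide (gL i < (L1.filter (fun x => A x j = true)).card)
      by_cases hb : A i j = true
      · rw [hb]; exact (decide_eq_true ((hgL3 j i hiL).1 hb)).symm
      · rw [bool_eq_false_of_ne hb]
        exact (decide_eq_false (fun hl => hb ((hgL3 j i hiL).2 hl))).symm
  have hcinj : Function.Injective c := by
    intro j j' he
    rw [hc] at he
    dsimp only at he
    rw [Prod.mk.injEq, Fin.mk.injEq, Fin.mk.injEq] at he
    apply hS
    funext i
    show A i j = A i j'
    by_cases hi : i ∈ K0
    · by_cases hb : A i j = true
      · rw [hb]
        have := (hgK3 j i hi).1 hb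
        rw [he.1] at this
        rw [(hgK3 j' i hi).2 this]
      · rw [bool_eq_false_of_ne hb]
        have hb' : ¬ A i j' = true := by
          intro hb'
          have := (hgK3 j' i hi).1 hb'
          rw [← he.1] at this
          exact hb ((hgK3 j i hi).2 this)
        rw [bool_eq_false_of_ne hb']
    · have hiL : i ∈ L1 := Finset.mem_sdiff.2 ⟨Finset.mem_univ _, hi⟩
      by_cases hb : A i j = true
      · rw [hb]
        have := (hgL3 j i hiL).1 hb
        rw [he.2] at this
        rw [(hgL3 j' i hiL).2 this]
      · rw [bool_eq_false_of_ne hb]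
        have hb' : ¬ A i j' = true := by
          intro hb'
          have := (hgL3 j' i hiL).1 hb'
          rw [← he.2] at this
          exact hb ((hgL3 j i hiL).2 this)
        rw [bool_eq_false_of_ne hb']
  -- cardinality bound
  have hcount : n ≤ (k + 1) * (m - k + 1) := by
    have := Fintype.card_le_of_injective c hcinj
    simpa [Fintype.card_prod] using this
  -- arithmetic for the balance of k
  have hkR : ((k : ℝ) - (m : ℝ)/2)^2 ≤ (m : ℝ)/6 := by
    have hcountR : (n : ℝ) ≤ ((k : ℝ) + 1) * (((m - k : ℕ) : ℝ) + 1) := by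
      exact_mod_cast hcount
    have hsub : ((m - k : ℕ) : ℝ) = (m : ℝ) - (k : ℝ) := by
      rw [Nat.cast_sub hkm]
    rw [hsub] at hcountR
    have hc2 : m^2 ≤ 4*(m^2/4) + 1 := sq_div_four m
    have hr2 : ((m : ℝ)^2 - 1)/4 ≤ ((m^2/4 : ℕ) : ℝ) := by
      have := (Nat.cast_le (α := ℝ)).2 hc2
      push_cast at this
      linarith
    push_cast at hn
    nlinarith [hn, hr2, hcountR]
  have habs : |(k : ℝ) - (m : ℝ)/2| ≤ Real.sqrt ((m : ℝ)/6) := by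
    rw [← Real.sqrt_sq_eq_abs]
    exact Real.sqrt_le_sqrt hkR
  have habs' := abs_le.1 habs
  refine ⟨k, hkm, ⟨⟨r, hrinj⟩, ⟨c, hcinj⟩, hentry⟩, ?_, ?_⟩
  · linarith [habs'.1]
  · have hsub : ((m - k : ℕ) : ℝ) = (m : ℝ) - (k : ℝ) := by
      rw [Nat.cast_sub hkm]
    rw [hsub]
    linarith [habs'.2]
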